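/- First derivative of the chi-score change: for every c ∈ (l_s, u_s), the function δ_chi has derivative at c equal to (n/(u_t − l_t)) · ( o_+² / (u_s − c)² − o_−² / (c − l_s)² ). -/

import Mathlib

/-- The chi score of a bin with observed count `o` and expected count `e`. -/
noncomputable def chiScore (o e : ℝ) : ℝ := (o - e) ^ 2 / e

/-- The change in total chi score due to a vertical split of the bin
`(ls, us] × (lt, ut]` at coordinate `c`, with fixed observed counts `op`
above and `om` below the split, and total sample size `n`. -/
noncomputable def deltaChi (ls us lt ut n op om : ℝ) (c : ℝ) : ℝ :=
  chiScore op ((us - c) * (ut - lt) / n) +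
  chiScore om ((c - ls) * (ut - lt) / n) -
  chiScore (op + om) ((us - ls) * (ut - lt) / n)

/-- First derivative of the chi-score change: for every `c ∈ (ls, us)`,
`δ_chi` has derivative `(n/(ut − lt)) · (op²/(us − c)² − om²/(c − ls)²)` at `c`. -/
theorem deltaChi_hasDerivAt (ls us lt ut n op om : ℝ)
    (hlu : ls < us) (hlt : lt < ut) (hn : 0 < n)
    (hop : 0 ≤ op) (hom : 0 ≤ om) :
    ∀ c ∈ Set.Ioo ls us,
      HasDerivAt (deltaChi ls us lt ut n op om)
        ((n / (ut - lt)) * (op ^ 2 / (us - c) ^ 2 - om ^ 2 / (c - ls) ^ 2)) c := by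
  intro c hc
  obtain ⟨h1, h2⟩ := hc
  have hk : (0:ℝ) < ut - lt := by linarith
  have huc : (0:ℝ) < us - c := by linarith
  have hcl : (0:ℝ) < c - ls := by linarith
  have hn' : n ≠ 0 := ne_of_gt hn
  have hk' : ut - lt ≠ 0 := ne_of_gt hk
  have huc' : us - c ≠ 0 := ne_of_gt huc
  have hcl' : c - ls ≠ 0 := ne_of_gt hcl
  have he1ne : (us - c) * (ut - lt) / n ≠ 0 := by positivity
  have he2ne : (c - ls) * (ut - lt) / n ≠ 0 := by positivity
  -- derivative of e1 c = (us - c)*(ut-lt)/n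
  have he1 : HasDerivAt (fun c : ℝ => (us - c) * (ut - lt) / n)
      ((-1) * (ut - lt) / n) c :=
    (((hasDerivAt_id c).const_sub us).mul_const (ut - lt)).div_const n
  have he2 : HasDerivAt (fun c : ℝ => (c - ls) * (ut - lt) / n)
      (1 * (ut - lt) / n) c :=
    (((hasDerivAt_id c).sub_const ls).mul_const (ut - lt)).div_const n
  have hnum1 : HasDerivAt (fun c : ℝ => (op - (us - c) * (ut - lt) / n) ^ 2)
      (2 * (op - (us - c) * (ut - lt) / n) ^ 1 * (0 - (-1) * (ut - lt) / n)) c := by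
    exact ((hasDerivAt_const c op).sub he1).pow 2
  have hnum2 : HasDerivAt (fun c : ℝ => (om - (c - ls) * (ut - lt) / n) ^ 2)
      (2 * (om - (c - ls) * (ut - lt) / n) ^ 1 * (0 - 1 * (ut - lt) / n)) c := by
    exact ((hasDerivAt_const c om).sub he2).pow 2
  have hf1 := hnum1.div he1 he1ne
  have hf2 := hnum2.div he2 he2ne
  have htot := ((hf1.add hf2).sub_const
    (chiScore (op + om) ((us - ls) * (ut - lt) / n)))
  have heq : (fun c => deltaChi ls us lt ut n op om c) =
      (fun c : ℝ => ((op - (us - c) * (ut - lt) / n) ^ 2 / ((us - c) * (ut - lt) / n)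
        + (om - (c - ls) * (ut - lt) / n) ^ 2 / ((c - ls) * (ut - lt) / n))
        - chiScore (op + om) ((us - ls) * (ut - lt) / n)) := by
    funext x
    simp [deltaChi, chiScore]
  rw [show deltaChi ls us lt ut n op om = fun c => deltaChi ls us lt ut n op om c from rfl, heq]
  convert htot using 1
  · rfl
  · rfl
  · rfl
  field_simp
  ring
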